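/- Let Q be a finite quiver (possibly with directed cycles) and V a representation of Q over ℂ. For each ordered pair of vertices (i,j) let A_{ij} = {a ∈ Q₁ : ta = i, ha = j}, and choose B_{ij} ⊆ A_{ij} with span{V(a) : a ∈ B_{ij}} = span{V(a) : a ∈ A_{ij}} inside Hom(V(i), V(j)). Then for every integer K ≥ 1: there exists a closed walk C in Q of length between 1 and K with tr V(C) ≠ 0 if and only if there exists a closed walk C′ in Q of length between 1 and K all of whose arcs belong to ⋃_{i,j} B_{ij} and with tr V(C′) ≠ 0. -/

import Mathlib

/-- The embedding of the linear map `V(a)` of an arc `a` as an endomorphism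
`ι_{ha} ∘ V(a) ∘ π_{ta}` of the direct sum `Π i, Vv i`. -/
noncomputable def endAt {I A : Type} [DecidableEq I] {Vv : I → Type}
    [∀ i, AddCommGroup (Vv i)] [∀ i, Module ℂ (Vv i)]
    (tl hd : A → I) (Vm : ∀ a : A, Vv (tl a) →ₗ[ℂ] Vv (hd a)) (a : A) :
    Module.End ℂ (∀ i, Vv i) :=
  (LinearMap.single ℂ Vv (hd a)).comp
    ((Vm a).comp (LinearMap.proj (R := ℂ) (φ := Vv) (tl a)))

/-- `V(a)` viewed as an element of `Hom(Vv i, Vv j)` when `tl a = i` and `hd a = j`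
(and `0` otherwise). -/
noncomputable def homAt {I A : Type} [DecidableEq I] {Vv : I → Type}
    [∀ i, AddCommGroup (Vv i)] [∀ i, Module ℂ (Vv i)]
    (tl hd : A → I) (Vm : ∀ a : A, Vv (tl a) →ₗ[ℂ] Vv (hd a)) (i j : I) (a : A) :
    Vv i →ₗ[ℂ] Vv j :=
  if e : tl a = i ∧ hd a = j then
    cast (by rw [e.1, e.2] : (Vv (tl a) →ₗ[ℂ] Vv (hd a)) = (Vv i →ₗ[ℂ] Vv j)) (Vm a)
  else 0

/-- `f ↦ ι_j ∘ f ∘ π_i` as a linear map. -/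
noncomputable def Lmap {I : Type} [DecidableEq I] (Vv : I → Type)
    [∀ i, AddCommGroup (Vv i)] [∀ i, Module ℂ (Vv i)] (i j : I) :
    (Vv i →ₗ[ℂ] Vv j) →ₗ[ℂ] Module.End ℂ (∀ i, Vv i) where
  toFun f := (LinearMap.single ℂ Vv j).comp (f.comp (LinearMap.proj (R := ℂ) (φ := Vv) i))
  map_add' f g := by simp [LinearMap.add_comp, LinearMap.comp_add]
  map_smul' c f := by simp [LinearMap.smul_comp, LinearMap.comp_smul]

lemma Lmap_homAt {I A : Type} [DecidableEq I] {Vv : I → Type}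
    [∀ i, AddCommGroup (Vv i)] [∀ i, Module ℂ (Vv i)]
    (tl hd : A → I) (Vm : ∀ a : A, Vv (tl a) →ₗ[ℂ] Vv (hd a)) {i j : I} {b : A}
    (h1 : tl b = i) (h2 : hd b = j) :
    Lmap Vv i j (homAt tl hd Vm i j b) = endAt tl hd Vm b := by
  subst h1; subst h2
  rw [homAt, dif_pos ⟨rfl, rfl⟩, cast_eq]
  rfl

lemma exists_ne_zero_of_span {M : Type} [AddCommGroup M] [Module ℂ M]
    (φ : M →ₗ[ℂ] ℂ) {S : Set M} {x : M} (hx : x ∈ Submodule.span ℂ S)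
    (hφ : φ x ≠ 0) : ∃ s ∈ S, φ s ≠ 0 := by
  by_contra h
  push_neg at h
  have hle : Submodule.span ℂ S ≤ LinearMap.ker φ :=
    Submodule.span_le.mpr fun s hs => LinearMap.mem_ker.mpr (h s hs)
  exact hφ (LinearMap.mem_ker.mp (hle hx))

lemma key_replace {I A : Type} [Fintype I] [Fintype A] [DecidableEq I]
    (tl hd : A → I)
    (Vv : I → Type) [∀ i, AddCommGroup (Vv i)] [∀ i, Module ℂ (Vv i)]
    [∀ i, FiniteDimensional ℂ (Vv i)]
    (Vm : ∀ a : A, Vv (tl a) →ₗ[ℂ] Vv (hd a))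
    (B : I → I → Set A)
    (hBsub : ∀ i j, B i j ⊆ {a : A | tl a = i ∧ hd a = j})
    (hBspan : ∀ i j,
      Submodule.span ℂ (homAt tl hd Vm i j '' B i j) =
        Submodule.span ℂ (homAt tl hd Vm i j '' {a : A | tl a = i ∧ hd a = j}))
    (l : List A) (M : Module.End ℂ (∀ i, Vv i))
    (htr : LinearMap.trace ℂ (∀ i, Vv i) (M * (l.map (endAt tl hd Vm)).reverse.prod) ≠ 0) :
    ∃ l' : List A, l'.map tl = l.map tl ∧ l'.map hd = l.map hd ∧
      (∀ a ∈ l', a ∈ B (tl a) (hd a)) ∧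
      LinearMap.trace ℂ (∀ i, Vv i) (M * (l'.map (endAt tl hd Vm)).reverse.prod) ≠ 0 := by
  induction l generalizing M with
  | nil => exact ⟨[], rfl, rfl, by simp, htr⟩
  | cons a t ih =>
    rw [List.map_cons, List.reverse_cons, List.prod_append, List.prod_singleton,
      ← mul_assoc] at htr
    -- htr : trace (M * prod(t) * endAt a) ≠ 0
    set P := M * (t.map (endAt tl hd Vm)).reverse.prod with hP
    -- linear functional f ↦ trace (P * Lmap f)
    set φ : (Vv (tl a) →ₗ[ℂ] Vv (hd a)) →ₗ[ℂ] ℂ :=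
      (LinearMap.trace ℂ (∀ i, Vv i)).comp
        ((LinearMap.mulLeft ℂ P).comp (Lmap Vv (tl a) (hd a))) with hφ
    have hφa : φ (homAt tl hd Vm (tl a) (hd a) a) ≠ 0 := by
      rw [hφ]
      simp only [LinearMap.comp_apply, LinearMap.mulLeft_apply]
      rw [Lmap_homAt tl hd Vm rfl rfl]
      exact htr
    have hmem : homAt tl hd Vm (tl a) (hd a) a ∈
        Submodule.span ℂ (homAt tl hd Vm (tl a) (hd a) '' B (tl a) (hd a)) := by
      rw [hBspan]
      exact Submodule.subset_span ⟨a, ⟨rfl, rfl⟩, rfl⟩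
    obtain ⟨f, ⟨b, hbB, rfl⟩, hfne⟩ := exists_ne_zero_of_span φ hmem hφa
    obtain ⟨hb1, hb2⟩ := hBsub _ _ hbB
    have hfb : LinearMap.trace ℂ (∀ i, Vv i) (P * endAt tl hd Vm b) ≠ 0 := by
      rw [hφ] at hfne
      simp only [LinearMap.comp_apply, LinearMap.mulLeft_apply] at hfne
      rwa [Lmap_homAt tl hd Vm hb1 hb2] at hfne
    -- cycle the trace and apply ih
    rw [hP, LinearMap.trace_mul_comm, ← mul_assoc] at hfb
    obtain ⟨t', ht1, ht2, htB, htr'⟩ := ih (endAt tl hd Vm b * M) hfb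
    refine ⟨b :: t', by simp [ht1, hb1], by simp [ht2, hb2], ?_, ?_⟩
    · intro x hx
      rcases List.mem_cons.mp hx with rfl | hx
      · rw [hb1, hb2]; exact hbB
      · exact htB x hx
    · rw [mul_assoc, LinearMap.trace_mul_comm, mul_assoc] at htr'
      simpa only [List.map_cons, List.reverse_cons, List.prod_append,
        List.prod_cons, List.prod_nil, mul_one, ne_eq] using htr'

/-- Restricting the arcs between each pair of vertices to a spanning subset `B i j`
of the corresponding maps preserves the existence of a closed walk of length between
`1` and `K` with nonzero trace (traces being computed via the embedded endomorphisms,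
whose product along a chained closed walk `C` has trace `tr V(C)`). -/
theorem closed_walk_trace_reduce_arcs
    {I A : Type} [Fintype I] [Fintype A] [DecidableEq I]
    (tl hd : A → I)
    (Vv : I → Type) [∀ i, AddCommGroup (Vv i)] [∀ i, Module ℂ (Vv i)]
    [∀ i, FiniteDimensional ℂ (Vv i)]
    (Vm : ∀ a : A, Vv (tl a) →ₗ[ℂ] Vv (hd a))
    (B : I → I → Set A)
    (hBsub : ∀ i j, B i j ⊆ {a : A | tl a = i ∧ hd a = j})
    (hBspan : ∀ i j,
      Submodule.span ℂ (homAt tl hd Vm i j '' B i j) =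
        Submodule.span ℂ (homAt tl hd Vm i j '' {a : A | tl a = i ∧ hd a = j}))
    (K : ℕ) (hK : 1 ≤ K) :
    ((∃ (l : List A) (hne : l ≠ []),
        l.length ≤ K ∧
        l.Chain' (fun a b => hd a = tl b) ∧
        hd (l.getLast hne) = tl (l.head hne) ∧
        LinearMap.trace ℂ (∀ i, Vv i) ((l.map (endAt tl hd Vm)).reverse.prod) ≠ 0) ↔
      (∃ (l : List A) (hne : l ≠ []),
        l.length ≤ K ∧
        l.Chain' (fun a b => hd a = tl b) ∧
        hd (l.getLast hne) = tl (l.head hne) ∧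
        (∀ a ∈ l, a ∈ B (tl a) (hd a)) ∧
        LinearMap.trace ℂ (∀ i, Vv i) ((l.map (endAt tl hd Vm)).reverse.prod) ≠ 0)) := by
  constructor
  · rintro ⟨l, hne, hlen, hchain, hclosed, htr⟩
    have htr' : LinearMap.trace ℂ (∀ i, Vv i)
        (1 * (l.map (endAt tl hd Vm)).reverse.prod) ≠ 0 := by simpa using htr
    obtain ⟨l', h1, h2, hB, htr''⟩ :=
      key_replace tl hd Vv Vm B hBsub hBspan l 1 htr'
    have hlen' : l'.length = l.length := by
      have := congrArg List.length h1; simpa using this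
    have hne' : l' ≠ [] := by
      intro h; apply hne
      rw [← List.length_eq_zero_iff] at h ⊢; omega
    refine ⟨l', hne', by omega, ?_, ?_, hB, by simpa using htr''⟩
    · have hpair : l'.map (fun a => (tl a, hd a)) = l.map (fun a => (tl a, hd a)) := by
        rw [← List.zip_map', ← List.zip_map', h1, h2]
      have hc' : List.Chain' (fun p q : I × I => p.2 = q.1) (l.map fun a => (tl a, hd a)) := by
        unfold List.Chain'; rw [List.isChain_map]
        exact hchain
      unfold List.Chain' at hc'; rw [← hpair, List.isChain_map] at hc'
      exact hc'
    · have g1 : hd (l'.getLast hne') = hd (l.getLast hne) := by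
        have h := congrArg List.getLast? h2
        rw [List.getLast?_map, List.getLast?_map, List.getLast?_eq_getLast hne',
          List.getLast?_eq_getLast hne] at h
        simpa using h
      have g2 : tl (l'.head hne') = tl (l.head hne) := by
        have h := congrArg List.head? h1
        rw [List.head?_map, List.head?_map, List.head?_eq_head hne',
          List.head?_eq_head hne] at h
        simpa using h
      rw [g1, g2]; exact hclosed
  · rintro ⟨l, hne, hlen, hchain, hclosed, _, htr⟩
    exact ⟨l, hne, hlen, hchain, hclosed, htr⟩
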